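/- Let 𝔥 be a fat indecomposable (−3)-saturated Hoffman graph whose reduced representation ψ of norm 3 takes values in the standard lattice ℤⁿ, and suppose a slim vertex s has exactly one fat neighbor in 𝔥. Then: (i) s has at most 4 neighbors in S^−(𝔥), and if it has exactly 4, then S^−(𝔥) is isomorphic to the extended Dynkin graph D̃₄; (ii) if s has exactly 3 neighbors in S^−(𝔥), then two of these neighbors have s as their unique neighbor in S^−(𝔥). -/

import Mathlib

attribute [local instance] Classical.propDecidable

open scoped RealInnerProductSpace

/-- A Hoffman graph: a graph together with a labeling of its vertices as fat or slim,
such that every fat vertex has a slim neighbor and fat vertices are pairwise nonadjacent. -/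
structure HoffmanGraph (V : Type*) where
  graph : SimpleGraph V
  IsFat : V → Prop
  fat_not_adj : ∀ {x y : V}, IsFat x → IsFat y → ¬ graph.Adj x y
  fat_slim_nbr : ∀ {x : V}, IsFat x → ∃ y : V, ¬ IsFat y ∧ graph.Adj x y

namespace HoffmanGraph

variable {V : Type*}

/-- A vertex is slim if it is not fat. -/
def IsSlim (H : HoffmanGraph V) (x : V) : Prop := ¬ H.IsFat x

/-- The type of slim vertices. -/
abbrev Slim (H : HoffmanGraph V) := {v : V // H.IsSlim v}

/-- The number of fat neighbors of a vertex. -/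
noncomputable def fatDeg (H : HoffmanGraph V) (x : V) : ℕ :=
  {f : V | H.IsFat f ∧ H.graph.Adj x f}.ncard

/-- The number of common fat neighbors of two vertices. -/
noncomputable def commonFat (H : HoffmanGraph V) (x y : V) : ℕ :=
  {f : V | H.IsFat f ∧ H.graph.Adj x f ∧ H.graph.Adj y f}.ncard

lemma commonFat_comm (H : HoffmanGraph V) (x y : V) :
    H.commonFat x y = H.commonFat y x := by
  unfold commonFat
  congr 1
  ext f
  simp only [Set.mem_setOf_eq]
  tauto

/-- A Hoffman graph is fat if every slim vertex has a fat neighbor. -/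
def IsFatGraph (H : HoffmanGraph V) : Prop :=
  ∀ x, H.IsSlim x → ∃ f, H.IsFat f ∧ H.graph.Adj x f

/-- A representation of norm `m`. -/
def IsRep (H : HoffmanGraph V) (m : ℝ) {E : Type*} [NormedAddCommGroup E]
    [InnerProductSpace ℝ E] (φ : V → E) : Prop :=
  (∀ x, H.IsSlim x → ⟪φ x, φ x⟫ = m) ∧
  (∀ x, H.IsFat x → ⟪φ x, φ x⟫ = 1) ∧
  (∀ x y, H.graph.Adj x y → ⟪φ x, φ y⟫ = 1) ∧
  (∀ x y, x ≠ y → ¬ H.graph.Adj x y → ⟪φ x, φ y⟫ = 0)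

/-- A reduced representation of norm `m` (only the values on slim vertices matter). -/
def IsReducedRep (H : HoffmanGraph V) (m : ℝ) {E : Type*} [NormedAddCommGroup E]
    [InnerProductSpace ℝ E] (ψ : V → E) : Prop :=
  (∀ x, H.IsSlim x → ⟪ψ x, ψ x⟫ = m - H.fatDeg x) ∧
  (∀ x y, H.IsSlim x → H.IsSlim y → H.graph.Adj x y → ⟪ψ x, ψ y⟫ = 1 - H.commonFat x y) ∧
  (∀ x y, H.IsSlim x → H.IsSlim y → x ≠ y → ¬ H.graph.Adj x y →
    ⟪ψ x, ψ y⟫ = - (H.commonFat x y : ℝ))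

/-- The matrix B(𝔥) = A_s − C Cᵀ, indexed by the slim vertices. -/
noncomputable def matrixB (H : HoffmanGraph V) : Matrix H.Slim H.Slim ℝ :=
  fun x y => (if H.graph.Adj x.1 y.1 then (1 : ℝ) else 0) - (H.commonFat x.1 y.1 : ℝ)

/-- The smallest eigenvalue of a Hoffman graph. -/
noncomputable def lambdaMin (H : HoffmanGraph V) [Fintype V] : ℝ :=
  sInf (spectrum ℝ H.matrixB)

/-- A subset of the vertices induces a Hoffman graph iff every fat vertex of it retains
a slim neighbor inside it. -/
def IsGoodSubset (H : HoffmanGraph V) (S : Set V) : Prop :=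
  ∀ x ∈ S, H.IsFat x → ∃ y ∈ S, ¬ H.IsFat y ∧ H.graph.Adj x y

/-- The induced Hoffman subgraph on a good subset. -/
def induce (H : HoffmanGraph V) (S : Set V) (hS : H.IsGoodSubset S) : HoffmanGraph S where
  graph := H.graph.induce S
  IsFat := fun x => H.IsFat x.1
  fat_not_adj := by
    intro x y hx hy hadj
    exact H.fat_not_adj hx hy hadj
  fat_slim_nbr := by
    rintro ⟨x, hxS⟩ hx
    obtain ⟨y, hyS, hy, hadj⟩ := hS x hxS hx
    exact ⟨⟨y, hyS⟩, hy, hadj⟩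

/-- An (abstract) induced Hoffman subgraph relation between Hoffman graphs. -/
def IsInducedSubgraphOf {V₁ V₂ : Type*} (H₁ : HoffmanGraph V₁) (H₂ : HoffmanGraph V₂) : Prop :=
  ∃ e : V₁ ↪ V₂, (∀ x y, H₂.graph.Adj (e x) (e y) ↔ H₁.graph.Adj x y) ∧
    (∀ x, H₂.IsFat (e x) ↔ H₁.IsFat x)

/-- Isomorphism of Hoffman graphs. -/
def IsIsoTo {V₁ V₂ : Type*} (H₁ : HoffmanGraph V₁) (H₂ : HoffmanGraph V₂) : Prop :=
  ∃ e : V₁ ≃ V₂, (∀ x y, H₂.graph.Adj (e x) (e y) ↔ H₁.graph.Adj x y) ∧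
    (∀ x, H₂.IsFat (e x) ↔ H₁.IsFat x)

/-- `H` is the sum of its induced subgraphs on `W₁` and `W₂`. -/
structure IsSum (H : HoffmanGraph V) (W₁ W₂ : Set V) : Prop where
  nonempty₁ : W₁.Nonempty
  nonempty₂ : W₂.Nonempty
  good₁ : H.IsGoodSubset W₁
  good₂ : H.IsGoodSubset W₂
  union_eq : W₁ ∪ W₂ = Set.univ
  slim_partition : ∀ v, H.IsSlim v → (v ∈ W₁ ↔ v ∉ W₂)
  fat_closed₁ : ∀ x ∈ W₁, H.IsSlim x → ∀ f, H.IsFat f → H.graph.Adj x f → f ∈ W₁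
  fat_closed₂ : ∀ x ∈ W₂, H.IsSlim x → ∀ f, H.IsFat f → H.graph.Adj x f → f ∈ W₂
  common_le : ∀ x ∈ W₁, ∀ y ∈ W₂, H.IsSlim x → H.IsSlim y → H.commonFat x y ≤ 1
  common_iff : ∀ x ∈ W₁, ∀ y ∈ W₂, H.IsSlim x → H.IsSlim y →
    (H.commonFat x y = 1 ↔ H.graph.Adj x y)

/-- `H` is decomposable if it is the sum of two nonempty induced Hoffman subgraphs. -/
def Decomposable (H : HoffmanGraph V) : Prop := ∃ W₁ W₂ : Set V, H.IsSum W₁ W₂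

def Indecomposable (H : HoffmanGraph V) : Prop := ¬ H.Decomposable

/-- `H` is the sum of the family of its induced subgraphs on `W i`. -/
structure IsSumFamily (H : HoffmanGraph V) {n : ℕ} (W : Fin n → Set V) : Prop where
  nonempty : ∀ i, (W i).Nonempty
  good : ∀ i, H.IsGoodSubset (W i)
  union_eq : ⋃ i, W i = Set.univ
  slim_mem_unique : ∀ v, H.IsSlim v → ∃! i, v ∈ W i
  fat_closed : ∀ i, ∀ x ∈ W i, H.IsSlim x → ∀ f, H.IsFat f → H.graph.Adj x f → f ∈ W i
  common_le : ∀ i j, i ≠ j → ∀ x ∈ W i, ∀ y ∈ W j, H.IsSlim x → H.IsSlim y →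
    H.commonFat x y ≤ 1
  common_iff : ∀ i j, i ≠ j → ∀ x ∈ W i, ∀ y ∈ W j, H.IsSlim x → H.IsSlim y →
    (H.commonFat x y = 1 ↔ H.graph.Adj x y)

/-- Attach a new fat vertex (the `none` vertex) adjacent exactly to the slim vertices in `S`. -/
def attachFat (H : HoffmanGraph V) (S : Set V) (hne : S.Nonempty)
    (hslim : ∀ v ∈ S, H.IsSlim v) : HoffmanGraph (Option V) where
  graph := {
    Adj := fun a b =>
      match a, b with
      | none, none => False
      | none, some v => v ∈ S
      | some v, none => v ∈ S
      | some u, some v => H.graph.Adj u v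
    symm := by
      constructor
      rintro (_|u) (_|v) h
      · exact h.elim
      · exact h
      · exact h
      · exact h.symm
    loopless := by
      constructor
      rintro (_|u) h
      · exact h.elim
      · exact H.graph.loopless.irrefl u h }
  IsFat := fun a => match a with | none => True | some v => H.IsFat v
  fat_not_adj := by
    rintro (_|u) (_|v) hu hv h
    · exact h.elim
    · exact (hslim v h) hv
    · exact (hslim u h) hu
    · exact H.fat_not_adj hu hv h
  fat_slim_nbr := by
    rintro (_|u) hu
    · obtain ⟨s, hs⟩ := hne
      exact ⟨some s, hslim s hs, hs⟩
    · obtain ⟨y, hy, hadj⟩ := H.fat_slim_nbr hu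
      exact ⟨some y, hy, hadj⟩

/-- `H` is `μ`-saturated: it has smallest eigenvalue at least `μ` and no fat vertex can be
attached while keeping the smallest eigenvalue at least `μ`. -/
def IsSaturated (H : HoffmanGraph V) [Fintype V] (μ : ℝ) : Prop :=
  μ ≤ H.lambdaMin ∧
  ∀ (S : Set V) (hne : S.Nonempty) (hslim : ∀ v ∈ S, H.IsSlim v),
    ¬ (μ ≤ (H.attachFat S hne hslim).lambdaMin)

/-- The special graph `S⁻(𝔥)`: slim vertices, adjacent when the inner product of their
reduced representations is negative. -/
noncomputable def specialMinus (H : HoffmanGraph V) : SimpleGraph H.Slim where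
  Adj x y := x ≠ y ∧
    ((H.graph.Adj x.1 y.1 ∧ (1 : ℝ) - (H.commonFat x.1 y.1 : ℝ) < 0) ∨
     (¬ H.graph.Adj x.1 y.1 ∧ -(H.commonFat x.1 y.1 : ℝ) < 0))
  symm := by
    constructor
    rintro x y ⟨hne, h⟩
    refine ⟨hne.symm, ?_⟩
    rw [H.commonFat_comm y.1 x.1]
    rcases h with ⟨ha, hl⟩ | ⟨ha, hl⟩
    · exact Or.inl ⟨ha.symm, hl⟩
    · exact Or.inr ⟨fun hadj => ha hadj.symm, hl⟩
  loopless := ⟨fun x h => h.1 rfl⟩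

/-- The special graph `S⁺(𝔥)`: slim vertices, adjacent when the inner product of their
reduced representations is positive. -/
noncomputable def specialPlus (H : HoffmanGraph V) : SimpleGraph H.Slim where
  Adj x y := x ≠ y ∧
    ((H.graph.Adj x.1 y.1 ∧ 0 < (1 : ℝ) - (H.commonFat x.1 y.1 : ℝ)) ∨
     (¬ H.graph.Adj x.1 y.1 ∧ 0 < -(H.commonFat x.1 y.1 : ℝ)))
  symm := by
    constructor
    rintro x y ⟨hne, h⟩
    refine ⟨hne.symm, ?_⟩
    rw [H.commonFat_comm y.1 x.1]
    rcases h with ⟨ha, hl⟩ | ⟨ha, hl⟩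
    · exact Or.inl ⟨ha.symm, hl⟩
    · exact Or.inr ⟨fun hadj => ha hadj.symm, hl⟩
  loopless := ⟨fun x h => h.1 rfl⟩

/-- The special graph `S(𝔥)`, the union of `S⁻(𝔥)` and `S⁺(𝔥)`. -/
noncomputable def special (H : HoffmanGraph V) : SimpleGraph H.Slim :=
  H.specialMinus ⊔ H.specialPlus

/-- `⟨S⟩_𝔥`: the set `S` together with all fat neighbors of its members. -/
def closureSet (H : HoffmanGraph V) (S : Set V) : Set V :=
  S ∪ {f | H.IsFat f ∧ ∃ x ∈ S, H.graph.Adj x f}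

/-- The Hoffman graph `𝔥^(t)` with one slim vertex (`none`) and `t` fat vertices. -/
def manyFat (t : ℕ) : HoffmanGraph (Option (Fin t)) where
  graph := {
    Adj := fun a b => (a = none ∧ b ≠ none) ∨ (a ≠ none ∧ b = none)
    symm := by
      constructor
      rintro a b (⟨h1, h2⟩ | ⟨h1, h2⟩)
      · exact Or.inr ⟨h2, h1⟩
      · exact Or.inl ⟨h2, h1⟩
    loopless := by
      constructor
      rintro a (⟨h1, h2⟩ | ⟨h1, h2⟩)
      · exact h2 h1
      · exact h1 h2 }
  IsFat := fun a => a ≠ none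
  fat_not_adj := by
    rintro a b ha hb (⟨h1, _⟩ | ⟨_, h1⟩)
    · exact ha h1
    · exact hb h1
  fat_slim_nbr := by
    intro a ha
    refine ⟨none, by simp, Or.inr ⟨ha, rfl⟩⟩

/-- An ordinary (slim) graph regarded as a Hoffman graph. -/
def ofSimple {W : Type*} (G : SimpleGraph W) : HoffmanGraph W where
  graph := G
  IsFat := fun _ => False
  fat_not_adj := by intro x y hx _ _; exact hx
  fat_slim_nbr := by intro x hx; exact hx.elim

end HoffmanGraph
namespace HoffmanGraph

variable {V : Type*}

/-- The Hoffman graph obtained by replacing the fat vertices `f i` by slim cliques of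
sizes `n i`, joining all neighbors of `f i` to all vertices of the `i`-th clique. -/
def blowup {k : ℕ} (H : HoffmanGraph V) (f : Fin k → V) (hf : ∀ i, H.IsFat (f i))
    (n : Fin k → ℕ) :
    HoffmanGraph ({v : V // v ∉ Set.range f} ⊕ (Σ i : Fin k, Fin (n i))) where
  graph := {
    Adj := fun a b =>
      match a, b with
      | .inl u, .inl v => H.graph.Adj u.1 v.1
      | .inl u, .inr x => H.graph.Adj u.1 (f x.1)
      | .inr x, .inl v => H.graph.Adj (f x.1) v.1
      | .inr x, .inr y => x ≠ y ∧ x.1 = y.1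
    symm := by
      constructor
      rintro (u|x) (v|y) h
      · exact h.symm
      · exact h.symm
      · exact h.symm
      · exact ⟨h.1.symm, h.2.symm⟩
    loopless := by
      constructor
      rintro (u|x) h
      · exact H.graph.loopless.irrefl _ h
      · exact h.1 rfl }
  IsFat := fun a => match a with | .inl u => H.IsFat u.1 | .inr _ => False
  fat_not_adj := by
    rintro (u|x) (v|y) hu hv h
    · exact H.fat_not_adj hu hv h
    · exact hv
    · exact hu
    · exact hu
  fat_slim_nbr := by
    rintro (u|x) hu
    · obtain ⟨y, hy, hadj⟩ := H.fat_slim_nbr hu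
      refine ⟨Sum.inl ⟨y, ?_⟩, hy, hadj⟩
      rintro ⟨i, rfl⟩
      exact hy (hf i)
    · exact hu.elim

/-- The slim graph obtained by replacing every fat vertex by a slim `n`-clique,
joining all neighbors of a fat vertex to all vertices of its clique. -/
def blowupAll (H : HoffmanGraph V) (n : ℕ) :
    HoffmanGraph (H.Slim ⊕ ({f : V // H.IsFat f} × Fin n)) where
  graph := {
    Adj := fun a b =>
      match a, b with
      | .inl u, .inl v => H.graph.Adj u.1 v.1
      | .inl u, .inr x => H.graph.Adj u.1 x.1.1
      | .inr x, .inl v => H.graph.Adj x.1.1 v.1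
      | .inr x, .inr y => x ≠ y ∧ x.1 = y.1
    symm := by
      constructor
      rintro (u|x) (v|y) h
      · exact h.symm
      · exact h.symm
      · exact h.symm
      · exact ⟨h.1.symm, h.2.symm⟩
    loopless := by
      constructor
      rintro (u|x) h
      · exact H.graph.loopless.irrefl _ h
      · exact h.1 rfl }
  IsFat := fun _ => False
  fat_not_adj := by intro x y hx _; exact hx.elim
  fat_slim_nbr := by intro x hx; exact hx.elim

/-- The Hoffman graph of Example 4.2: slim vertices `ℤ/4ℤ` (the `inl`'s), fat vertices
`f_j` for `j ∈ ℤ/4ℤ` (the `inr`'s), with edges `{0,2}`, `{1,3}` and `{i, f_j}` for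
`i = j` or `i = j + 1`. -/
def exampleA3tilde : HoffmanGraph (ZMod 4 ⊕ ZMod 4) where
  graph := {
    Adj := fun a b =>
      match a, b with
      | .inl i, .inl j => j = i + 2
      | .inl i, .inr j => i = j ∨ i = j + 1
      | .inr j, .inl i => i = j ∨ i = j + 1
      | .inr _, .inr _ => False
    symm := by
      have h4 : (2 : ZMod 4) + 2 = 0 := by decide
      constructor
      rintro (i|i) (j|j) h
      · have h' : j = i + 2 := h
        subst h'
        show i = i + 2 + 2
        rw [add_assoc, h4, add_zero]
      · exact h
      · exact h
      · exact h.elim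
    loopless := by
      constructor
      rintro (i|i) h
      · exact absurd (left_eq_add.mp h) (by decide)
      · exact h }
  IsFat := fun a => match a with | .inl _ => False | .inr _ => True
  fat_not_adj := by
    rintro (i|i) (j|j) hx hy h
    · exact hx
    · exact hx
    · exact hy
    · exact h
  fat_slim_nbr := by
    rintro (i|i) hx
    · exact hx.elim
    · exact ⟨Sum.inl i, id, Or.inl rfl⟩

end HoffmanGraph

/-- The extended Dynkin graph `D̃₄`, i.e. the star `K_{1,4}`. -/
def tildeD4Graph : SimpleGraph (Fin 5) := SimpleGraph.fromRel (fun a _ => a = 0)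

/-- The Dynkin graph `A_m`: the path on `m` vertices. -/
def dynkinA (m : ℕ) : SimpleGraph (Fin m) :=
  SimpleGraph.fromRel (fun i j => i.1 + 1 = j.1)

/-- The extended Dynkin graph `Ã_m`: the cycle on `m + 1` vertices. -/
def tildeA (m : ℕ) : SimpleGraph (ZMod (m + 1)) :=
  SimpleGraph.fromRel (fun i j => i + 1 = j)

/-- The Dynkin graph `D_m`: the path `1 - 2 - ⋯ - (m-1)` with the extra vertex `0`
attached to the vertex `2`. -/
def dynkinD (m : ℕ) : SimpleGraph (Fin m) :=
  SimpleGraph.fromRel (fun i j => (1 ≤ i.1 ∧ i.1 + 1 = j.1) ∨ (i.1 = 0 ∧ j.1 = 2))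

/-- The extended Dynkin graph `D̃_m` on `m + 1` vertices: the path `1 - 2 - ⋯ - (m-1)`
with the extra vertex `0` attached to `2` and the extra vertex `m` attached to `m - 2`. -/
def tildeD (m : ℕ) : SimpleGraph (Fin (m + 1)) :=
  SimpleGraph.fromRel (fun i j =>
    (1 ≤ i.1 ∧ i.1 + 1 = j.1 ∧ j.1 ≤ m - 1) ∨ (i.1 = 0 ∧ j.1 = 2) ∨ (i.1 = m ∧ j.1 = m - 2))
namespace HoffmanGraph
section Lemma48Aux
set_option linter.unusedSectionVars false

variable {V : Type} [Fintype V] {H : HoffmanGraph V}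

lemma aux_common_le_fatDeg (x y : V) : H.commonFat x y ≤ H.fatDeg x := by
  apply Set.ncard_le_ncard _ (Set.toFinite _)
  intro f hf; exact ⟨hf.1, hf.2.1⟩

lemma aux_fatDeg_pos {x f : V} (hf : H.IsFat f) (hadj : H.graph.Adj x f) :
    1 ≤ H.fatDeg x := by
  have h : ({f} : Set V) ⊆ {g | H.IsFat g ∧ H.graph.Adj x g} := by
    simp only [Set.singleton_subset_iff, Set.mem_setOf_eq]; exact ⟨hf, hadj⟩
  have := Set.ncard_le_ncard h (Set.toFinite _)
  simpa [fatDeg] using this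

lemma aux_common_pos {x y f : V} (hf : H.IsFat f) (hxf : H.graph.Adj x f)
    (hyf : H.graph.Adj y f) : 1 ≤ H.commonFat x y := by
  have h : ({f} : Set V) ⊆ {g | H.IsFat g ∧ H.graph.Adj x g ∧ H.graph.Adj y g} := by
    simp only [Set.singleton_subset_iff, Set.mem_setOf_eq]; exact ⟨hf, hxf, hyf⟩
  have := Set.ncard_le_ncard h (Set.toFinite _)
  simpa [commonFat] using this

lemma aux_unique_fat {x y f : V} (h1 : H.fatDeg x = 1) (hc : 1 ≤ H.commonFat x y)
    (hf : H.IsFat f) (hxf : H.graph.Adj x f) : H.graph.Adj y f := by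
  obtain ⟨a, ha⟩ := Set.ncard_eq_one.mp h1
  have hfa : f = a := by
    have : f ∈ {g : V | H.IsFat g ∧ H.graph.Adj x g} := ⟨hf, hxf⟩
    rw [ha] at this; simpa using this
  have hne : {g : V | H.IsFat g ∧ H.graph.Adj x g ∧ H.graph.Adj y g}.Nonempty := by
    exact (Set.ncard_pos (Set.toFinite _)).mp (by exact hc)
  obtain ⟨g, hg⟩ := hne
  have hga : g = a := by
    have : g ∈ {g : V | H.IsFat g ∧ H.graph.Adj x g} := ⟨hg.1, hg.2.1⟩
    rw [ha] at this; simpa using this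
  rw [hfa, ← hga]; exact hg.2.2

section B
set_option linter.unusedSectionVars false
variable {n : ℕ} {ψ : V → EuclideanSpace ℝ (Fin n)} (hψ : H.IsReducedRep 3 ψ)
include hψ

lemma aux_q_cases {x y : V} (hx : H.IsSlim x) (hy : H.IsSlim y) (hxy : x ≠ y) :
    (H.graph.Adj x y ∧ ⟪ψ x, ψ y⟫ = 1 - (H.commonFat x y : ℝ)) ∨
    (¬ H.graph.Adj x y ∧ ⟪ψ x, ψ y⟫ = -(H.commonFat x y : ℝ)) := by
  by_cases h : H.graph.Adj x y
  · exact Or.inl ⟨h, hψ.2.1 x y hx hy h⟩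
  · exact Or.inr ⟨h, hψ.2.2 x y hx hy hxy h⟩

lemma aux_q_self {x : V} (hx : H.IsSlim x) : ⟪ψ x, ψ x⟫ = 3 - (H.fatDeg x : ℝ) :=
  hψ.1 x hx

lemma aux_fatDeg_le_three {x : V} (hx : H.IsSlim x) : H.fatDeg x ≤ 3 := by
  have h0 : (0:ℝ) ≤ ⟪ψ x, ψ x⟫ := real_inner_self_nonneg
  rw [aux_q_self hψ hx] at h0
  have : (H.fatDeg x : ℝ) ≤ 3 := by linarith
  exact_mod_cast this

lemma aux_sminus_adj_iff (x y : H.Slim) :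
    H.specialMinus.Adj x y ↔ x ≠ y ∧ ⟪ψ x.1, ψ y.1⟫ < 0 := by
  constructor
  · rintro (⟨hne, h⟩ : x ≠ y ∧ _)
    refine ⟨hne, ?_⟩
    have hxy : x.1 ≠ y.1 := fun h' => hne (Subtype.ext h')
    rcases aux_q_cases hψ x.2 y.2 hxy with ⟨ha, he⟩ | ⟨ha, he⟩ <;>
      rcases h with ⟨ha', hl⟩ | ⟨ha', hl⟩ <;> first | (rw [he]; exact hl) | exact absurd ha' (by tauto)
  · rintro ⟨hne, h⟩
    have hxy : x.1 ≠ y.1 := fun h' => hne (Subtype.ext h')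
    refine (⟨hne, ?_⟩ : x ≠ y ∧ _)
    rcases aux_q_cases hψ x.2 y.2 hxy with ⟨ha, he⟩ | ⟨ha, he⟩
    · exact Or.inl ⟨ha, by rw [← he]; exact h⟩
    · exact Or.inr ⟨ha, by rw [← he]; exact h⟩

/-- negative inner product gives common fat ≥ 1 and value ≤ -1 -/
lemma aux_q_neg {x y : V} (hx : H.IsSlim x) (hy : H.IsSlim y) (hxy : x ≠ y)
    (h : ⟪ψ x, ψ y⟫ < 0) : ⟪ψ x, ψ y⟫ ≤ -1 ∧ 1 ≤ H.commonFat x y := by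
  rcases aux_q_cases hψ hx hy hxy with ⟨ha, he⟩ | ⟨ha, he⟩ <;> rw [he] at h ⊢
  · have h2 : (1:ℝ) < (H.commonFat x y : ℝ) := by linarith
    have h3 : 2 ≤ H.commonFat x y := by exact_mod_cast Nat.lt_iff_add_one_le.mp (by exact_mod_cast h2)
    constructor
    · have : (2:ℝ) ≤ (H.commonFat x y : ℝ) := by exact_mod_cast h3
      linarith
    · omega
  · have h2 : (0:ℝ) < (H.commonFat x y : ℝ) := by linarith
    have h3 : 1 ≤ H.commonFat x y := by exact_mod_cast Nat.lt_iff_add_one_le.mp (by exact_mod_cast h2)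
    constructor
    · have : (1:ℝ) ≤ (H.commonFat x y : ℝ) := by exact_mod_cast h3
      linarith
    · exact h3

lemma aux_q_le_neg_two {x y : V} (hx : H.IsSlim x) (hy : H.IsSlim y) (hxy : x ≠ y)
    (h : ⟪ψ x, ψ y⟫ ≤ -2) : 2 ≤ H.commonFat x y := by
  rcases aux_q_cases hψ hx hy hxy with ⟨ha, he⟩ | ⟨ha, he⟩ <;> rw [he] at h
  · have : (3:ℝ) ≤ (H.commonFat x y : ℝ) := by linarith
    have : 3 ≤ H.commonFat x y := by exact_mod_cast this
    omega
  · have : (2:ℝ) ≤ (H.commonFat x y : ℝ) := by linarith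
    exact_mod_cast this

lemma aux_common_pos_q_nonpos {x y : V} (hx : H.IsSlim x) (hy : H.IsSlim y) (hxy : x ≠ y)
    (h : 1 ≤ H.commonFat x y) : ⟪ψ x, ψ y⟫ ≤ 0 := by
  have h' : (1:ℝ) ≤ (H.commonFat x y : ℝ) := by exact_mod_cast h
  rcases aux_q_cases hψ hx hy hxy with ⟨ha, he⟩ | ⟨ha, he⟩ <;> rw [he] <;> linarith
end B

section C
omit [Fintype V]
lemma aux_decomposable (H : HoffmanGraph V) (S₁ S₂ : Set V)
    (hS1 : S₁.Nonempty) (hS2 : S₂.Nonempty)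
    (hslim1 : ∀ x ∈ S₁, H.IsSlim x) (hslim2 : ∀ x ∈ S₂, H.IsSlim x)
    (hpart : ∀ x, H.IsSlim x → (x ∈ S₁ ↔ x ∉ S₂))
    (hcross : ∀ x ∈ S₁, ∀ y ∈ S₂,
      H.commonFat x y ≤ 1 ∧ (H.commonFat x y = 1 ↔ H.graph.Adj x y)) :
    H.Decomposable := by
  set W₁ : Set V := S₁ ∪ {f | H.IsFat f ∧ ∃ x ∈ S₁, H.graph.Adj x f} with hW₁
  set W₂ : Set V := S₂ ∪ {f | H.IsFat f ∧ ∃ x ∈ S₂, H.graph.Adj x f} with hW₂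
  have hslimW₁ : ∀ x ∈ W₁, H.IsSlim x → x ∈ S₁ := by
    rintro x (h | h) hsl
    · exact h
    · exact absurd h.1 hsl
  have hslimW₂ : ∀ x ∈ W₂, H.IsSlim x → x ∈ S₂ := by
    rintro x (h | h) hsl
    · exact h
    · exact absurd h.1 hsl
  refine ⟨W₁, W₂, ?_⟩
  constructor
  · exact hS1.mono Set.subset_union_left
  · exact hS2.mono Set.subset_union_left
  · -- good₁
    intro x hx hfatx
    rcases hx with hx | hx
    · exact absurd hfatx (hslim1 x hx)
    · obtain ⟨y, hy, hadj⟩ := hx.2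
      exact ⟨y, Or.inl hy, hslim1 y hy, hadj.symm⟩
  · intro x hx hfatx
    rcases hx with hx | hx
    · exact absurd hfatx (hslim2 x hx)
    · obtain ⟨y, hy, hadj⟩ := hx.2
      exact ⟨y, Or.inl hy, hslim2 y hy, hadj.symm⟩
  · -- union_eq
    apply Set.eq_univ_of_forall
    intro v
    by_cases hv : H.IsFat v
    · obtain ⟨y, hy, hadj⟩ := H.fat_slim_nbr hv
      rcases (em (y ∈ S₂)) with h | h
      · exact Or.inr (Or.inr ⟨hv, y, h, hadj.symm⟩)
      · have : y ∈ S₁ := (hpart y hy).mpr h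
        exact Or.inl (Or.inr ⟨hv, y, this, hadj.symm⟩)
    · rcases (em (v ∈ S₂)) with h | h
      · exact Or.inr (Or.inl h)
      · exact Or.inl (Or.inl ((hpart v hv).mpr h))
  · -- slim_partition
    intro v hv
    constructor
    · intro h1 h2
      have h1' := hslimW₁ v h1 hv
      have h2' := hslimW₂ v h2 hv
      exact ((hpart v hv).mp h1') h2'
    · intro h
      have : v ∉ S₂ := fun hc => h (Or.inl hc)
      exact Or.inl ((hpart v hv).mpr this)
  · -- fat_closed₁
    intro x hx hsl f hf hadj
    exact Or.inr ⟨hf, x, hslimW₁ x hx hsl, hadj⟩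
  · intro x hx hsl f hf hadj
    exact Or.inr ⟨hf, x, hslimW₂ x hx hsl, hadj⟩
  · -- common_le
    intro x hx y hy hsx hsy
    exact (hcross x (hslimW₁ x hx hsx) y (hslimW₂ y hy hsy)).1
  · intro x hx y hy hsx hsy
    exact (hcross x (hslimW₁ x hx hsx) y (hslimW₂ y hy hsy)).2
end C

section D
variable {m : ℕ}

lemma int_entry_bound (f : Fin m → ℤ) (h : ∑ i, f i * f i ≤ 2) (i : Fin m) :
    -1 ≤ f i ∧ f i ≤ 1 := by
  have h1 : f i * f i ≤ ∑ j, f j * f j :=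
    Finset.single_le_sum (fun j _ => mul_self_nonneg (f j)) (Finset.mem_univ i)
  constructor <;> nlinarith

lemma int_sum_two {a b : Fin m} (hab : a ≠ b) (f : Fin m → ℤ)
    (h : ∀ i, i ≠ a → i ≠ b → f i = 0) : ∑ i, f i = f a + f b := by
  rw [← Finset.sum_subset (Finset.subset_univ ({a, b} : Finset (Fin m)))]
  · exact Finset.sum_pair hab
  · intro i _ hi
    simp only [Finset.mem_insert, Finset.mem_singleton] at hi
    push_neg at hi
    exact h i hi.1 hi.2

lemma int_sum_split {a b : Fin m} (hab : a ≠ b) (f : Fin m → ℤ) :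
    ∑ i, f i = f a + f b + ∑ i ∈ Finset.univ \ {a, b}, f i := by
  have h := Finset.sum_sdiff (f := f) (Finset.subset_univ ({a, b} : Finset (Fin m)))
  rw [Finset.sum_pair hab] at h
  linarith

lemma int_norm_two_support (u : Fin m → ℤ) (h : ∑ i, u i * u i = 2) :
    ∃ a b, a ≠ b ∧ u a * u a = 1 ∧ u b * u b = 1 ∧ ∀ i, i ≠ a → i ≠ b → u i = 0 := by
  have hb := int_entry_bound u (le_of_eq h)
  have hex : ∃ a, u a ≠ 0 := by
    by_contra hc
    push_neg at hc
    rw [Finset.sum_eq_zero (fun i _ => by rw [hc i]; ring)] at h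
    omega
  obtain ⟨a, ha⟩ := hex
  have ha2 : u a * u a = 1 := by
    have h1 := hb a
    have : u a = 1 ∨ u a = -1 := by omega
    rcases this with h' | h' <;> rw [h'] <;> ring
  have hrest : ∑ i ∈ Finset.univ.erase a, u i * u i = 1 := by
    have h2 := Finset.add_sum_erase Finset.univ (fun i => u i * u i) (Finset.mem_univ a)
    omega
  have hex2 : ∃ b ∈ Finset.univ.erase a, u b ≠ 0 := by
    by_contra hc
    push_neg at hc
    rw [Finset.sum_eq_zero (fun i hi => by rw [hc i hi]; ring)] at hrest
    omega
  obtain ⟨b, hbm, hb0⟩ := hex2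
  have hba : b ≠ a := Finset.ne_of_mem_erase hbm
  have hb2 : u b * u b = 1 := by
    have h1 := hb b
    have : u b = 1 ∨ u b = -1 := by omega
    rcases this with h' | h' <;> rw [h'] <;> ring
  refine ⟨a, b, hba.symm, ha2, hb2, ?_⟩
  intro i hia hib
  have hz : ∑ j ∈ (Finset.univ.erase a).erase b, u j * u j = 0 := by
    have h2 := Finset.add_sum_erase (Finset.univ.erase a) (fun i => u i * u i) hbm
    omega
  have hnn : ∀ j ∈ (Finset.univ.erase a).erase b, 0 ≤ u j * u j :=
    fun j _ => mul_self_nonneg (u j)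
  have := (Finset.sum_eq_zero_iff_of_nonneg hnn).mp hz i
    (by simp [Finset.mem_erase, hia, hib])
  exact mul_self_eq_zero.mp this

lemma int_type {a b : Fin m} (hab : a ≠ b) (u t : Fin m → ℤ)
    (hu2 : u a * u a = 1) (hub : u b * u b = 1) (hu0 : ∀ i, i ≠ a → i ≠ b → u i = 0)
    (htb : ∀ i, -1 ≤ t i ∧ t i ≤ 1)
    (hut : ∑ i, u i * t i = -1) :
    (u a * t a = -1 ∧ t b = 0) ∨ (u b * t b = -1 ∧ t a = 0) := by
  have hsum : u a * t a + u b * t b = -1 := by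
    rw [← int_sum_two hab (fun i => u i * t i) (fun i h1 h2 => by rw [hu0 i h1 h2]; ring)]
    exact hut
  obtain ⟨ta1, ta2⟩ := htb a
  obtain ⟨tb1, tb2⟩ := htb b
  rcases mul_self_eq_one_iff.mp hu2 with h | h <;>
    rcases mul_self_eq_one_iff.mp hub with h' | h' <;>
    rw [h, h'] at hsum ⊢ <;> omega
end D

section E
variable {m : ℕ}

lemma int_pair {a b : Fin m} (hab : a ≠ b) (u t t' : Fin m → ℤ)
    (hu2 : u a * u a = 1)
    (ht2 : ∑ i, t i * t i ≤ 2) (ht'2 : ∑ i, t' i * t' i ≤ 2)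
    (hta : u a * t a = -1) (htb : t b = 0)
    (ht'a : u a * t' a = -1) (ht'b : t' b = 0)
    (htt' : ∑ i, t i * t' i = 0) :
    ∃ c, c ≠ a ∧ c ≠ b ∧ t c * t' c = -1 ∧ t c * t c = 1 ∧ t' c * t' c = 1 ∧
      (∀ i, i ≠ a → i ≠ c → t i = 0) ∧ (∀ i, i ≠ a → i ≠ c → t' i = 0) := by
  have hua : u a = 1 ∨ u a = -1 := mul_self_eq_one_iff.mp hu2
  have hta' : t a = -(u a) := by rcases hua with h | h <;> rw [h] at hta ⊢ <;> omega
  have ht'a' : t' a = -(u a) := by rcases hua with h | h <;> rw [h] at ht'a ⊢ <;> omega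
  have htaa : t a * t a = 1 := by rw [hta']; rcases hua with h | h <;> rw [h] <;> ring
  have ht'aa : t' a * t' a = 1 := by rw [ht'a']; rcases hua with h | h <;> rw [h] <;> ring
  have htat'a : t a * t' a = 1 := by
    rw [hta', ht'a']; rcases hua with h | h <;> rw [h] <;> ring
  set s : Finset (Fin m) := Finset.univ \ {a, b} with hs
  have hmem : ∀ i, i ∈ s ↔ i ≠ a ∧ i ≠ b := by
    intro i; simp [hs, Finset.mem_sdiff]
  have hstt' : ∑ i ∈ s, t i * t' i = -1 := by
    have := int_sum_split hab (fun i => t i * t' i)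
    rw [← hs] at this
    rw [htt', htb] at this
    have h0 : t a * t' a = 1 := htat'a
    omega
  have hst : ∑ i ∈ s, t i * t i ≤ 1 := by
    have := int_sum_split hab (fun i => t i * t i)
    rw [← hs] at this
    rw [htb] at this
    omega
  have hst' : ∑ i ∈ s, t' i * t' i ≤ 1 := by
    have := int_sum_split hab (fun i => t' i * t' i)
    rw [← hs] at this
    rw [ht'b] at this
    omega
  have hex : ∃ c ∈ s, t c * t' c ≠ 0 := by
    by_contra hc
    push_neg at hc
    rw [Finset.sum_eq_zero hc] at hstt'
    omega
  obtain ⟨c, hcm, hc0⟩ := hex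
  obtain ⟨hca, hcb⟩ := (hmem c).mp hcm
  have hbt := int_entry_bound t ht2
  have hbt' := int_entry_bound t' ht'2
  have htc : t c = 1 ∨ t c = -1 := by
    have h1 := hbt c
    have : t c ≠ 0 := fun h => hc0 (by rw [h]; ring)
    omega
  have ht'c : t' c = 1 ∨ t' c = -1 := by
    have h1 := hbt' c
    have : t' c ≠ 0 := fun h => hc0 (by rw [h]; ring)
    omega
  have htcc : t c * t c = 1 := by rcases htc with h | h <;> rw [h] <;> ring
  have ht'cc : t' c * t' c = 1 := by rcases ht'c with h | h <;> rw [h] <;> ring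
  -- all other entries of t on s vanish
  have hzt : ∀ i ∈ s.erase c, t i = 0 := by
    have h2 := Finset.add_sum_erase s (fun i => t i * t i) hcm
    have hz : ∑ j ∈ s.erase c, t j * t j = 0 := by
      have hnn : 0 ≤ ∑ j ∈ s.erase c, t j * t j :=
        Finset.sum_nonneg (fun j _ => mul_self_nonneg (t j))
      omega
    intro i hi
    exact mul_self_eq_zero.mp ((Finset.sum_eq_zero_iff_of_nonneg
      (fun j _ => mul_self_nonneg (t j))).mp hz i hi)
  have hzt' : ∀ i ∈ s.erase c, t' i = 0 := by
    have h2 := Finset.add_sum_erase s (fun i => t' i * t' i) hcm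
    have hz : ∑ j ∈ s.erase c, t' j * t' j = 0 := by
      have hnn : 0 ≤ ∑ j ∈ s.erase c, t' j * t' j :=
        Finset.sum_nonneg (fun j _ => mul_self_nonneg (t' j))
      omega
    intro i hi
    exact mul_self_eq_zero.mp ((Finset.sum_eq_zero_iff_of_nonneg
      (fun j _ => mul_self_nonneg (t' j))).mp hz i hi)
  have htct'c : t c * t' c = -1 := by
    have h2 := Finset.add_sum_erase s (fun i => t i * t' i) hcm
    have hz : ∑ j ∈ s.erase c, t j * t' j = 0 :=
      Finset.sum_eq_zero (fun j hj => by rw [hzt j hj]; ring)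
    rw [hz] at h2
    omega
  refine ⟨c, hca, hcb, htct'c, htcc, ht'cc, ?_, ?_⟩
  · intro i hia hic
    by_cases hib : i = b
    · rw [hib]; exact htb
    · exact hzt i (Finset.mem_erase.mpr ⟨hic, (hmem i).mpr ⟨hia, hib⟩⟩)
  · intro i hia hic
    by_cases hib : i = b
    · rw [hib]; exact ht'b
    · exact hzt' i (Finset.mem_erase.mpr ⟨hic, (hmem i).mpr ⟨hia, hib⟩⟩)

lemma int_three {a b : Fin m} (hab : a ≠ b) (u t1 t2 t3 : Fin m → ℤ)
    (hu2 : u a * u a = 1)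
    (h12 : ∑ i, t1 i * t1 i ≤ 2) (h22 : ∑ i, t2 i * t2 i ≤ 2) (h32 : ∑ i, t3 i * t3 i ≤ 2)
    (h1a : u a * t1 a = -1) (h1b : t1 b = 0)
    (h2a : u a * t2 a = -1) (h2b : t2 b = 0)
    (h3a : u a * t3 a = -1) (h3b : t3 b = 0)
    (q12 : ∑ i, t1 i * t2 i = 0) (q13 : ∑ i, t1 i * t3 i = 0)
    (q23 : ∑ i, t2 i * t3 i = 0) : False := by
  obtain ⟨c, hca, hcb, hprod, h1cc, h2cc, h1z, h2z⟩ :=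
    int_pair hab u t1 t2 hu2 h12 h22 h1a h1b h2a h2b q12
  obtain ⟨c', hc'a, hc'b, hprod', h1cc', h3cc', h1z', h3z'⟩ :=
    int_pair hab u t1 t3 hu2 h12 h32 h1a h1b h3a h3b q13
  have hcc' : c' = c := by
    by_contra hne
    have := h1z c' hc'a hne
    rw [this] at hprod'
    omega
  rw [hcc'] at hprod'
  obtain ⟨c'', hc''a, hc''b, hprod'', h2cc'', h3cc'', h2z'', h3z''⟩ :=
    int_pair hab u t2 t3 hu2 h22 h32 h2a h2b h3a h3b q23
  have hcc'' : c'' = c := by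
    by_contra hne
    have := h2z c'' hc''a hne
    rw [this] at hprod''
    omega
  rw [hcc''] at hprod''
  have h1c : t1 c = 1 ∨ t1 c = -1 := mul_self_eq_one_iff.mp h1cc
  have h2c : t2 c = -(t1 c) := by rcases h1c with h | h <;> rw [h] at hprod ⊢ <;> omega
  have h3c : t3 c = -(t1 c) := by rcases h1c with h | h <;> rw [h] at hprod' ⊢ <;> omega
  rw [h2c, h3c] at hprod''
  rcases h1c with h | h <;> rw [h] at hprod'' <;> omega

lemma int_final {a b : Fin m} (hab : a ≠ b) {c : Fin m} (hca : c ≠ a) (hcb : c ≠ b)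
    (u t t' tk w : Fin m → ℤ)
    (hu2 : u a * u a = 1) (hub2 : u b * u b = 1) (hu0 : ∀ i, i ≠ a → i ≠ b → u i = 0)
    (hta : u a * t a = -1) (ht0 : ∀ i, i ≠ a → i ≠ c → t i = 0) (htcc : t c * t c = 1)
    (ht'a : u a * t' a = -1) (ht'0 : ∀ i, i ≠ a → i ≠ c → t' i = 0)
    (htt'c : t c * t' c = -1)
    (hkb : u b * tk b = -1) (hka : tk a = 0)
    (hw2 : ∑ i, w i * w i ≤ 2) (hwu : ∑ i, u i * w i = 0)
    (hwt : ∑ i, t i * w i = -1) (hwt' : ∑ i, t' i * w i ≤ 0)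
    (hwk : ∑ i, tk i * w i ≤ 0) : False := by
  have hua : u a = 1 ∨ u a = -1 := mul_self_eq_one_iff.mp hu2
  have hub : u b = 1 ∨ u b = -1 := mul_self_eq_one_iff.mp hub2
  have hbw := int_entry_bound w hw2
  have hac : a ≠ c := fun h => hca h.symm
  have hta' : t a = -(u a) := by rcases hua with h | h <;> rw [h] at hta ⊢ <;> omega
  have ht'a' : t' a = -(u a) := by rcases hua with h | h <;> rw [h] at ht'a ⊢ <;> omega
  have htc : t c = 1 ∨ t c = -1 := mul_self_eq_one_iff.mp htcc
  have ht'c : t' c = -(t c) := by rcases htc with h | h <;> rw [h] at htt'c ⊢ <;> omega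
  -- split the sums
  have hwt2 : t a * w a + t c * w c = -1 := by
    rw [← int_sum_two hac (fun i => t i * w i)
      (fun i h1 h2 => by rw [ht0 i h1 h2]; ring)]
    exact hwt
  have hwt'2 : t' a * w a + t' c * w c ≤ 0 := by
    rw [← int_sum_two hac (fun i => t' i * w i)
      (fun i h1 h2 => by rw [ht'0 i h1 h2]; ring)]
    exact hwt'
  rw [hta'] at hwt2
  rw [ht'a', ht'c] at hwt'2
  -- derive w a = u a
  have hwa : w a = u a := by
    have h1 := hbw a
    rcases hua with h | h <;> rw [h] at hwt2 hwt'2 ⊢ <;> rcases htc with h' | h' <;>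
      rw [h'] at hwt2 hwt'2 <;> omega
  have hwc : w c = 0 := by
    have h1 := hbw c
    rcases hua with h | h <;> rw [h] at hwt2 hwt'2 <;> rcases htc with h' | h' <;>
      rw [h'] at hwt2 hwt'2 <;> omega
  -- w b = -(u b)
  have hwu2 : u a * w a + u b * w b = 0 := by
    rw [← int_sum_two hab (fun i => u i * w i)
      (fun i h1 h2 => by rw [hu0 i h1 h2]; ring)]
    exact hwu
  have hwb : w b = -(u b) := by
    rw [hwa] at hwu2
    rcases hua with h | h <;> rw [h] at hwu2 <;> rcases hub with h' | h' <;>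
      rw [h'] at hwu2 ⊢ <;> omega
  -- w vanishes outside {a, b}
  have hwz : ∀ i, i ≠ a → i ≠ b → w i = 0 := by
    intro i hia hib
    have hsplit := int_sum_split hab (fun i => w i * w i)
    have hwaa : w a * w a = 1 := by rw [hwa]; exact hu2
    have hwbb : w b * w b = 1 := by
      rw [hwb]; rcases hub with h | h <;> rw [h] <;> ring
    have hz : ∑ j ∈ Finset.univ \ {a, b}, w j * w j = 0 := by
      have hnn : 0 ≤ ∑ j ∈ Finset.univ \ {a, b}, w j * w j :=
        Finset.sum_nonneg (fun j _ => mul_self_nonneg (w j))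
      omega
    have hi : i ∈ Finset.univ \ ({a, b} : Finset (Fin m)) := by
      simp [Finset.mem_sdiff, hia, hib]
    exact mul_self_eq_zero.mp ((Finset.sum_eq_zero_iff_of_nonneg
      (fun j _ => mul_self_nonneg (w j))).mp hz i hi)
  -- compute ∑ tk * w
  have hwk2 : tk a * w a + tk b * w b = ∑ i, tk i * w i := by
    rw [int_sum_two hab (fun i => tk i * w i)
      (fun i h1 h2 => by rw [hwz i h1 h2]; ring)]
  have htkb : tk b = -(u b) := by
    rcases hub with h | h <;> rw [h] at hkb ⊢ <;> omega
  rw [hka, hwb, htkb] at hwk2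
  have hsum : ∑ i, tk i * w i = 1 := by
    rw [← hwk2]
    have h1 : -(u b) * -(u b) = 1 := by rcases hub with h | h <;> rw [h] <;> ring
    rw [h1]; ring
  rw [hsum] at hwk
  exact absurd hwk (by norm_num)
end E

end Lemma48Aux
end HoffmanGraph

set_option maxHeartbeats 2000000 in
open HoffmanGraph in
/-- Lemma 4.8: in a fat indecomposable `(-3)`-saturated Hoffman graph with an integral
reduced representation of norm `3`, if a slim vertex `s` has exactly one fat neighbor,
then (i) `s` has at most `4` neighbors in `S⁻(𝔥)`, with equality only if
`S⁻(𝔥) ≅ D̃₄`; (ii) if `s` has exactly `3` neighbors in `S⁻(𝔥)`, two of them have `s`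
as their unique neighbor in `S⁻(𝔥)`. -/
theorem specialMinus_neighbors_of_one_fat_neighbor {V : Type} [Fintype V]
    (H : HoffmanGraph V) (hfat : H.IsFatGraph) (hind : H.Indecomposable)
    (hsat : H.IsSaturated (-3))
    (n : ℕ) (ψ : V → EuclideanSpace ℝ (Fin n)) (hψ : H.IsReducedRep 3 ψ)
    (hint : ∀ v, H.IsSlim v → ∀ i, ∃ k : ℤ, ψ v i = (k : ℝ))
    (s : V) (hs : H.IsSlim s) (h1 : H.fatDeg s = 1) :
    ((H.specialMinus.neighborSet ⟨s, hs⟩).ncard ≤ 4 ∧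
      ((H.specialMinus.neighborSet ⟨s, hs⟩).ncard = 4 →
        Nonempty (H.specialMinus ≃g tildeD4Graph))) ∧
    ((H.specialMinus.neighborSet ⟨s, hs⟩).ncard = 3 →
      ∃ t₁ t₂ : H.Slim, t₁ ≠ t₂ ∧
        t₁ ∈ H.specialMinus.neighborSet ⟨s, hs⟩ ∧
        t₂ ∈ H.specialMinus.neighborSet ⟨s, hs⟩ ∧
        H.specialMinus.neighborSet t₁ = {⟨s, hs⟩} ∧
        H.specialMinus.neighborSet t₂ = {⟨s, hs⟩}) := by
  classical
  clear hsat
  set s' : H.Slim := ⟨s, hs⟩ with hs'def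
  set N : Set H.Slim := H.specialMinus.neighborSet s' with hNdef
  obtain ⟨f, hfset⟩ := Set.ncard_eq_one.mp h1
  have hff : H.IsFat f ∧ H.graph.Adj s f := by
    have hmem : f ∈ {g : V | H.IsFat g ∧ H.graph.Adj s g} := by rw [hfset]; exact rfl
    exact hmem
  have hqss : ⟪ψ s, ψ s⟫ = 2 := by
    rw [aux_q_self hψ hs, h1]; norm_num
  -- facts about neighbors of s in S⁻
  have hNfact : ∀ t : H.Slim, t ∈ N → s ≠ t.1 ∧ ⟪ψ s, ψ t.1⟫ = -1 ∧ H.graph.Adj t.1 f := by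
    intro t ht
    have hadj : H.specialMinus.Adj s' t := ht
    rw [aux_sminus_adj_iff hψ] at hadj
    obtain ⟨hne, hq⟩ := hadj
    have hne' : s ≠ t.1 := fun h => hne (Subtype.ext h)
    have h2 := aux_q_neg hψ hs t.2 hne' hq
    have hcle : H.commonFat s t.1 ≤ 1 := by
      have := aux_common_le_fatDeg (H := H) s t.1
      omega
    have hc1 : H.commonFat s t.1 = 1 := by omega
    refine ⟨hne', ?_, aux_unique_fat (H := H) h1 h2.2 hff.1 hff.2⟩
    rcases aux_q_cases hψ hs t.2 hne' with ⟨ha, he⟩ | ⟨ha, he⟩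
    · rw [he, hc1] at hq ⊢
      norm_num at hq
    · rw [he, hc1]; norm_num
  have hNpair : ∀ t u : H.Slim, t ∈ N → u ∈ N → t ≠ u → ⟪ψ t.1, ψ u.1⟫ ≤ 0 := by
    intro t u ht hu htu
    have hc : 1 ≤ H.commonFat t.1 u.1 :=
      aux_common_pos (H := H) hff.1 (hNfact t ht).2.2 (hNfact u hu).2.2
    exact aux_common_pos_q_nonpos hψ t.2 u.2 (fun h => htu (Subtype.ext h)) hc
  have hself_le : ∀ x : V, H.IsSlim x → ⟪ψ x, ψ x⟫ ≤ 2 := by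
    intro x hx
    rw [aux_q_self hψ hx]
    obtain ⟨g, hg1, hg2⟩ := hfat x hx
    have := aux_fatDeg_pos (H := H) hg1 hg2
    have h3 : (1:ℝ) ≤ (H.fatDeg x : ℝ) := by exact_mod_cast this
    linarith
  -- the finset of neighbors
  have hNfin : N.Finite := Set.toFinite N
  set T : Finset H.Slim := hNfin.toFinset with hTdef
  have hTmem : ∀ t : H.Slim, t ∈ T ↔ t ∈ N := fun t => Set.Finite.mem_toFinset hNfin
  have hncard : N.ncard = T.card := Set.ncard_eq_toFinset_card N hNfin
  set m : ℕ := T.card with hmdef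
  set Sv : EuclideanSpace ℝ (Fin n) := ∑ t ∈ T, ψ t.1 with hSvdef
  have hSv_s : ⟪ψ s, Sv⟫ = -(m:ℝ) := by
    rw [hSvdef, inner_sum]
    rw [Finset.sum_congr rfl (fun t ht => (hNfact t ((hTmem t).mp ht)).2.1)]
    simp [hmdef]
  have hSvSv_eq : ⟪Sv, Sv⟫ = ∑ t ∈ T, ∑ u ∈ T, ⟪ψ t.1, ψ u.1⟫ := by
    rw [hSvdef, sum_inner]
    exact Finset.sum_congr rfl (fun t _ => inner_sum _ _ _)
  have hrow_le : ∀ t ∈ T, ∑ u ∈ T, ⟪ψ t.1, ψ u.1⟫ ≤ 2 := by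
    intro t ht
    rw [← Finset.add_sum_erase T _ ht]
    have h2 : ⟪ψ t.1, ψ t.1⟫ ≤ 2 := hself_le t.1 t.2
    have h3 : ∑ u ∈ T.erase t, ⟪ψ t.1, ψ u.1⟫ ≤ 0 :=
      Finset.sum_nonpos (fun u hu => hNpair t u ((hTmem t).mp ht)
        ((hTmem u).mp (Finset.mem_of_mem_erase hu)) (Finset.ne_of_mem_erase hu).symm)
    linarith
  have hSvSv_le : ⟪Sv, Sv⟫ ≤ 2 * m := by
    rw [hSvSv_eq]
    calc ∑ t ∈ T, ∑ u ∈ T, ⟪ψ t.1, ψ u.1⟫ ≤ ∑ _t ∈ T, (2:ℝ) :=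
      Finset.sum_le_sum hrow_le
    _ = 2 * m := by rw [Finset.sum_const]; push_cast; ring
  have hexpand : ⟪(2:ℝ)•Sv + (m:ℝ)•ψ s, (2:ℝ)•Sv + (m:ℝ)•ψ s⟫ =
      4*⟪Sv, Sv⟫ - 4*(m:ℝ)^2 + 2*(m:ℝ)^2 := by
    simp only [real_inner_add_add_self, real_inner_smul_left, real_inner_smul_right]
    rw [real_inner_comm (ψ s) Sv, hSv_s, hqss]
    ring
  have hkey : (0:ℝ) ≤ 8*(m:ℝ) - 2*(m:ℝ)^2 := by
    have h0 : (0:ℝ) ≤ ⟪(2:ℝ)•Sv + (m:ℝ)•ψ s, (2:ℝ)•Sv + (m:ℝ)•ψ s⟫ :=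
      real_inner_self_nonneg
    rw [hexpand] at h0
    nlinarith [hSvSv_le]
  have hm4 : m ≤ 4 := by
    by_contra hc
    push_neg at hc
    have : (5:ℝ) ≤ (m:ℝ) := by exact_mod_cast hc
    nlinarith
  refine ⟨⟨by rw [hncard]; exact hm4, ?_⟩, ?_⟩
  · -- the m = 4 case
    intro hcard4
    have hm : m = 4 := by rw [hncard] at hcard4; exact hcard4
    have hmr : (m:ℝ) = 4 := by rw [hm]; norm_num
    have hSvSv8 : ⟪Sv, Sv⟫ = 8 := by
      have h0 : (0:ℝ) ≤ ⟪(2:ℝ)•Sv + (m:ℝ)•ψ s, (2:ℝ)•Sv + (m:ℝ)•ψ s⟫ :=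
        real_inner_self_nonneg
      rw [hexpand, hmr] at h0
      have h1' := hSvSv_le
      rw [hmr] at h1'
      nlinarith
    have hrow_eq : ∀ t ∈ T, ∑ u ∈ T, ⟪ψ t.1, ψ u.1⟫ = 2 := by
      intro t ht
      by_contra hne
      have hlt : ∑ u ∈ T, ⟪ψ t.1, ψ u.1⟫ < 2 := lt_of_le_of_ne (hrow_le t ht) hne
      have hstrict : ⟪Sv, Sv⟫ < 2 * m := by
        rw [hSvSv_eq]
        calc ∑ t ∈ T, ∑ u ∈ T, ⟪ψ t.1, ψ u.1⟫ < ∑ _t ∈ T, (2:ℝ) :=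
          Finset.sum_lt_sum hrow_le ⟨t, ht, hlt⟩
        _ = 2 * m := by rw [Finset.sum_const]; push_cast; ring
      rw [hSvSv8, hmr] at hstrict
      norm_num at hstrict
    have hdiag : ∀ t ∈ T, ⟪ψ t.1, ψ t.1⟫ = 2 ∧
        ∀ u ∈ T, u ≠ t → ⟪ψ t.1, ψ u.1⟫ = 0 := by
      intro t ht
      have hrow := hrow_eq t ht
      rw [← Finset.add_sum_erase T _ ht] at hrow
      have h2 : ⟪ψ t.1, ψ t.1⟫ ≤ 2 := hself_le _ t.2
      have h3 : ∀ u ∈ T.erase t, ⟪ψ t.1, ψ u.1⟫ ≤ 0 :=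
        fun u hu => hNpair t u ((hTmem t).mp ht)
          ((hTmem u).mp (Finset.mem_of_mem_erase hu)) (Finset.ne_of_mem_erase hu).symm
      have hsum_nonpos : ∑ u ∈ T.erase t, ⟪ψ t.1, ψ u.1⟫ ≤ 0 := Finset.sum_nonpos h3
      have hS0 : ∑ u ∈ T.erase t, ⟪ψ t.1, ψ u.1⟫ = 0 := by linarith
      refine ⟨by linarith, fun u hu hut => ?_⟩
      exact (Finset.sum_eq_zero_iff_of_nonpos h3).mp hS0 u (Finset.mem_erase.mpr ⟨hut, hu⟩)
    have hfd1 : ∀ t : H.Slim, t ∈ T → H.fatDeg t.1 = 1 := by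
      intro t ht
      have h2 := (hdiag t ht).1
      rw [aux_q_self hψ t.2] at h2
      have : (H.fatDeg t.1 : ℝ) = 1 := by linarith
      exact_mod_cast this
    have hSvval : Sv = (-2:ℝ) • ψ s := by
      have h0 : ⟪(2:ℝ)•Sv + (m:ℝ)•ψ s, (2:ℝ)•Sv + (m:ℝ)•ψ s⟫ = 0 := by
        rw [hexpand, hSvSv8, hmr]; norm_num
      have hz := inner_self_eq_zero.mp h0
      rw [hmr] at hz
      have h4 := congrArg (fun v => ((1:ℝ)/2) • v) hz
      simp only [smul_add, smul_smul, smul_zero] at h4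
      norm_num at h4
      rw [show (2:ℝ) = 4/2 by norm_num] at h4
      -- h4 : Sv + (4/2)•ψ s = 0 (hopefully); fall back to linear algebra
      have : Sv + (2:ℝ) • ψ s = 0 := by
        norm_num at h4 ⊢
        exact h4
      have h5 := eq_neg_of_add_eq_zero_left this
      rw [h5]
      module
    -- outsider elimination
    have houtside : ∀ z : H.Slim, z ≠ s' → z ∉ N →
        ⟪ψ z.1, ψ s⟫ = 0 ∧ ∀ t ∈ T, ⟪ψ z.1, ψ t.1⟫ = 0 := by
      intro z hzs hzN
      have hzs' : z.1 ≠ s := fun h => hzs (Subtype.ext h)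
      have hqzs_nonneg : ¬ (⟪ψ z.1, ψ s⟫ < 0) := by
        intro hneg
        apply hzN
        have : H.specialMinus.Adj s' z := by
          rw [aux_sminus_adj_iff hψ]
          exact ⟨fun h => hzs h.symm, by rw [real_inner_comm]; exact hneg⟩
        exact this
      have hzT : ∀ t ∈ T, z ≠ t := by
        intro t ht h
        subst h
        exact hzN ((hTmem z).mp ht)
      have hno_negT : ∀ t ∈ T, ¬ (⟪ψ z.1, ψ t.1⟫ < 0) := by
        intro t ht hneg
        have hzt : z.1 ≠ t.1 := fun h => hzT t ht (Subtype.ext h)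
        have h2 := aux_q_neg hψ z.2 t.2 hzt hneg
        have hcle : H.commonFat z.1 t.1 ≤ 1 := by
          have h3 := aux_common_le_fatDeg (H := H) t.1 z.1
          rw [H.commonFat_comm] at h3
          rw [hfd1 t ht] at h3
          exact h3
        have hc1' : 1 ≤ H.commonFat t.1 z.1 := by rw [H.commonFat_comm]; exact h2.2
        have hzf : H.graph.Adj z.1 f :=
          aux_unique_fat (H := H) (hfd1 t ht) hc1' hff.1 (hNfact t ((hTmem t).mp ht)).2.2
        -- all inner products with members of T are ≤ 0, and with s
        have hallT : ∀ u ∈ T, ⟪ψ z.1, ψ u.1⟫ ≤ 0 := by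
          intro u hu
          have hc : 1 ≤ H.commonFat z.1 u.1 :=
            aux_common_pos (H := H) hff.1 hzf (hNfact u ((hTmem u).mp hu)).2.2
          exact aux_common_pos_q_nonpos hψ z.2 u.2
            (fun h => hzT u hu (Subtype.ext h)) hc
        have hqs0 : ⟪ψ z.1, ψ s⟫ = 0 := by
          have hc : 1 ≤ H.commonFat z.1 s :=
            aux_common_pos (H := H) hff.1 hzf hff.2
          have := aux_common_pos_q_nonpos hψ z.2 hs hzs' hc
          rcases lt_or_eq_of_le this with h' | h'
          · exact absurd h' hqzs_nonneg
          · exact h'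
        have hsum : ∑ u ∈ T, ⟪ψ z.1, ψ u.1⟫ = 0 := by
          have h4 : ⟪ψ z.1, Sv⟫ = ∑ u ∈ T, ⟪ψ z.1, ψ u.1⟫ := inner_sum _ _ _
          rw [hSvval, real_inner_smul_right, hqs0] at h4
          linarith [h4.symm]
        have hq0 : ⟪ψ z.1, ψ t.1⟫ = 0 :=
          (Finset.sum_eq_zero_iff_of_nonpos hallT).mp hsum t ht
        linarith [h2.1]
      -- now all products are nonneg
      have hnonnegT : ∀ t ∈ T, 0 ≤ ⟪ψ z.1, ψ t.1⟫ :=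
        fun t ht => not_lt.mp (hno_negT t ht)
      have hqs_nonneg : 0 ≤ ⟪ψ z.1, ψ s⟫ := not_lt.mp hqzs_nonneg
      have hsumz : ∑ u ∈ T, ⟪ψ z.1, ψ u.1⟫ = -2 * ⟪ψ z.1, ψ s⟫ := by
        have h4 : ⟪ψ z.1, Sv⟫ = ∑ u ∈ T, ⟪ψ z.1, ψ u.1⟫ := inner_sum _ _ _
        rw [hSvval, real_inner_smul_right] at h4
        linarith [h4.symm]
      have hsum_nonneg : 0 ≤ ∑ u ∈ T, ⟪ψ z.1, ψ u.1⟫ := Finset.sum_nonneg hnonnegT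
      have hqs0 : ⟪ψ z.1, ψ s⟫ = 0 := by linarith
      refine ⟨hqs0, fun t ht => ?_⟩
      have hsum0 : ∑ u ∈ T, ⟪ψ z.1, ψ u.1⟫ = 0 := by rw [hsumz, hqs0]; ring
      exact (Finset.sum_eq_zero_iff_of_nonneg hnonnegT).mp hsum0 t ht
    -- there are no other slim vertices
    have hall : ∀ z : H.Slim, z = s' ∨ z ∈ N := by
      by_contra hc
      push_neg at hc
      obtain ⟨z₀, hz₀s, hz₀N⟩ := hc
      apply hind
      apply aux_decomposable H (Subtype.val '' (insert s' N))
        (Subtype.val '' {w : H.Slim | w ∉ insert s' N})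
      · exact ⟨s, s', Set.mem_insert _ _, rfl⟩
      · exact ⟨z₀.1, z₀, by simp [hz₀s, hz₀N], rfl⟩
      · rintro x ⟨x', _, rfl⟩; exact x'.2
      · rintro x ⟨x', _, rfl⟩; exact x'.2
      · intro x hx
        constructor
        · rintro ⟨x₁, hx₁, rfl⟩ ⟨x₂, hx₂, hval⟩
          have : x₂ = x₁ := Subtype.ext hval
          rw [this] at hx₂
          exact hx₂ hx₁
        · intro h
          by_cases hmem : (⟨x, hx⟩ : H.Slim) ∈ insert s' N
          · exact ⟨⟨x, hx⟩, hmem, rfl⟩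
          · exact absurd ⟨⟨x, hx⟩, hmem, rfl⟩ h
      · rintro x ⟨x', hx', rfl⟩ y ⟨y', hy', rfl⟩
        have hy's : y' ≠ s' := fun h => hy' (h ▸ Set.mem_insert _ _)
        have hy'N : y' ∉ N := fun h => hy' (Set.mem_insert_of_mem _ h)
        obtain ⟨hq1, hq2⟩ := houtside y' hy's hy'N
        have hq0 : ⟪ψ x'.1, ψ y'.1⟫ = 0 := by
          rcases hx' with h | h
          · rw [h]; rw [real_inner_comm]; exact hq1
          · rw [real_inner_comm]; exact hq2 x' ((hTmem x').mpr h)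
        have hxy : x'.1 ≠ y'.1 := by
          intro h
          have : x' = y' := Subtype.ext h
          rw [this] at hx'
          exact hy' hx'
        rcases aux_q_cases hψ x'.2 y'.2 hxy with ⟨ha, he⟩ | ⟨ha, he⟩
        · rw [he] at hq0
          have hc1 : H.commonFat x'.1 y'.1 = 1 := by
            have : (H.commonFat x'.1 y'.1 : ℝ) = 1 := by linarith
            exact_mod_cast this
          exact ⟨le_of_eq hc1, by rw [hc1]; exact ⟨fun _ => ha, fun _ => rfl⟩⟩
        · rw [he] at hq0
          have hc0 : H.commonFat x'.1 y'.1 = 0 := by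
            have : (H.commonFat x'.1 y'.1 : ℝ) = 0 := by linarith
            exact_mod_cast this
          rw [hc0]
          exact ⟨by omega, ⟨fun h => absurd h (by omega), fun h => absurd h ha⟩⟩
    -- build the isomorphism
    have hs'T : s' ∉ T := by
      rw [hTmem]
      exact fun h => H.specialMinus.loopless.irrefl s' h
    have heT : Nonempty (↥T ≃ Fin 4) :=
      ⟨Fintype.equivFinOfCardEq (by rw [Fintype.card_coe]; exact hm)⟩
    obtain ⟨eT⟩ := heT
    set φ : H.Slim → Fin 5 := fun z => if h : z ∈ T then (eT ⟨z, h⟩).succ else 0 with hφdef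
    set ρ : Fin 5 → H.Slim := fun i => Fin.cases s' (fun j => (eT.symm j).1) i with hρdef
    have hρφ : ∀ z, ρ (φ z) = z := by
      intro z
      by_cases h : z ∈ T
      · rw [hφdef]
        simp only [dif_pos h]
        rw [hρdef]
        simp only [Fin.cases_succ]
        rw [Equiv.symm_apply_apply]
      · have hz : z = s' := by
          rcases hall z with h' | h'
          · exact h'
          · exact absurd ((hTmem z).mpr h') h
        rw [hφdef]
        simp only [dif_neg h]
        rw [hρdef]
        simp only [Fin.cases_zero]
        exact hz.symm
    have hφρ : ∀ i, φ (ρ i) = i := by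
      intro i
      refine Fin.cases ?_ ?_ i
      · show φ (ρ 0) = 0
        rw [hρdef]
        simp only [Fin.cases_zero]
        rw [hφdef]
        simp only [dif_neg hs'T]
      · intro j
        show φ (ρ j.succ) = j.succ
        rw [hρdef]
        simp only [Fin.cases_succ]
        have hmemj : ((eT.symm j) : H.Slim) ∈ T := (eT.symm j).2
        rw [hφdef]
        simp only [dif_pos hmemj]
        congr 1
        rw [show (⟨((eT.symm j) : H.Slim), hmemj⟩ : ↥T) = eT.symm j from Subtype.ext rfl,
          Equiv.apply_symm_apply]
    have hφ0 : ∀ z, φ z = 0 ↔ z = s' := by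
      intro z
      constructor
      · intro h
        by_cases hz : z ∈ T
        · rw [hφdef] at h
          simp only [dif_pos hz] at h
          exact absurd h (Fin.succ_ne_zero _)
        · rcases hall z with h' | h'
          · exact h'
          · exact absurd ((hTmem z).mpr h') hz
      · rintro rfl
        rw [hφdef]
        simp only [dif_neg hs'T]
    have hadjN : ∀ t : H.Slim, t ∈ N → H.specialMinus.Adj s' t := fun t ht => ht
    refine ⟨⟨⟨φ, ρ, hρφ, hφρ⟩, ?_⟩⟩
    intro a b
    show tildeD4Graph.Adj (φ a) (φ b) ↔ H.specialMinus.Adj a b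
    rw [tildeD4Graph, SimpleGraph.fromRel_adj]
    constructor
    · rintro ⟨hne, h0⟩
      have hab : a ≠ b := fun h => hne (congrArg φ h)
      rcases h0 with h0 | h0
      · have ha : a = s' := (hφ0 a).mp h0
        have hb : b ∈ N := by
          rcases hall b with h' | h'
          · exact absurd (ha.trans h'.symm) hab
          · exact h'
        rw [ha]
        exact hadjN b hb
      · have hb : b = s' := (hφ0 b).mp h0
        have ha : a ∈ N := by
          rcases hall a with h' | h'
          · exact absurd (h'.trans hb.symm) hab
          · exact h'
        rw [hb]
        exact (hadjN a ha).symm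
    · intro hadj
      have hab : a ≠ b := hadj.ne
      refine ⟨fun h => hab ((Equiv.mk φ ρ hρφ hφρ).injective h), ?_⟩
      by_cases ha : a = s'
      · exact Or.inl ((hφ0 a).mpr ha)
      · by_cases hb : b = s'
        · exact Or.inr ((hφ0 b).mpr hb)
        · exfalso
          have haN : a ∈ N := by rcases hall a with h' | h'; exact absurd h' ha; exact h'
          have hbN : b ∈ N := by rcases hall b with h' | h'; exact absurd h' hb; exact h'
          have hq := (aux_sminus_adj_iff hψ a b).mp hadj
          have hq0 := (hdiag a ((hTmem a).mpr haN)).2 b ((hTmem b).mpr hbN) (Ne.symm hab)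
          rw [hq0] at hq
          exact lt_irrefl 0 hq.2
  · -- the m = 3 case
    intro hcard3
    have hm : m = 3 := by rw [hncard] at hcard3; exact hcard3
    have hmr : (m:ℝ) = 3 := by rw [hm]; norm_num
    have hX45 : (4.5:ℝ) ≤ ⟪Sv, Sv⟫ := by
      have h0 : (0:ℝ) ≤ ⟪(2:ℝ)•Sv + (m:ℝ)•ψ s, (2:ℝ)•Sv + (m:ℝ)•ψ s⟫ :=
        real_inner_self_nonneg
      rw [hexpand, hmr] at h0
      nlinarith
    have hadjN3 : ∀ t : H.Slim, t ∈ N → H.specialMinus.Adj s' t := fun t ht => ht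
    -- pairwise inner products of neighbors vanish
    have hpair0 : ∀ t u : H.Slim, t ∈ T → u ∈ T → t ≠ u → ⟪ψ t.1, ψ u.1⟫ = 0 := by
      intro t u ht hu htu
      rcases eq_or_lt_of_le (hNpair t u ((hTmem t).mp ht) ((hTmem u).mp hu) htu) with h | h
      · exact h
      exfalso
      have hq1 : ⟪ψ t.1, ψ u.1⟫ ≤ -1 :=
        (aux_q_neg hψ t.2 u.2 (fun h' => htu (Subtype.ext h')) h).1
      have hq2 : ⟪ψ u.1, ψ t.1⟫ ≤ -1 := by rw [real_inner_comm]; exact hq1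
      have huet : u ∈ T.erase t := Finset.mem_erase.mpr ⟨htu.symm, hu⟩
      have hteu : t ∈ T.erase u := Finset.mem_erase.mpr ⟨htu, ht⟩
      -- row sums
      have hrow_t : ∑ w ∈ T, ⟪ψ t.1, ψ w.1⟫ ≤ 1 := by
        rw [← Finset.add_sum_erase T _ ht, ← Finset.add_sum_erase _ _ huet]
        have h3 : ∑ w ∈ (T.erase t).erase u, ⟪ψ t.1, ψ w.1⟫ ≤ 0 :=
          Finset.sum_nonpos (fun w hw => hNpair t w ((hTmem t).mp ht)
            ((hTmem w).mp (Finset.mem_of_mem_erase (Finset.mem_of_mem_erase hw)))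
            (Finset.ne_of_mem_erase (Finset.mem_of_mem_erase hw)).symm)
        have h4 : ⟪ψ t.1, ψ t.1⟫ ≤ 2 := hself_le _ t.2
        linarith
      have hrow_u : ∑ w ∈ T, ⟪ψ u.1, ψ w.1⟫ ≤ 1 := by
        rw [← Finset.add_sum_erase T _ hu, ← Finset.add_sum_erase _ _ hteu]
        have h3 : ∑ w ∈ (T.erase u).erase t, ⟪ψ u.1, ψ w.1⟫ ≤ 0 :=
          Finset.sum_nonpos (fun w hw => hNpair u w ((hTmem u).mp hu)
            ((hTmem w).mp (Finset.mem_of_mem_erase (Finset.mem_of_mem_erase hw)))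
            (Finset.ne_of_mem_erase (Finset.mem_of_mem_erase hw)).symm)
        have h4 : ⟪ψ u.1, ψ u.1⟫ ≤ 2 := hself_le _ u.2
        linarith
      have hrest : ∑ w ∈ (T.erase t).erase u, ∑ w' ∈ T, ⟪ψ w.1, ψ w'.1⟫ ≤ 2 := by
        have hcard_rest : ((T.erase t).erase u).card = 1 := by
          rw [Finset.card_erase_of_mem huet, Finset.card_erase_of_mem ht]
          omega
        calc ∑ w ∈ (T.erase t).erase u, ∑ w' ∈ T, ⟪ψ w.1, ψ w'.1⟫
            ≤ ∑ _w ∈ (T.erase t).erase u, (2:ℝ) := Finset.sum_le_sum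
              (fun w hw => hrow_le w (Finset.mem_of_mem_erase (Finset.mem_of_mem_erase hw)))
        _ = 2 := by rw [Finset.sum_const, hcard_rest]; norm_num
      have hXle : ⟪Sv, Sv⟫ ≤ 4 := by
        rw [hSvSv_eq, ← Finset.add_sum_erase T _ ht, ← Finset.add_sum_erase _ _ huet]
        linarith
      linarith
    -- extract the three neighbors
    obtain ⟨t1, t2, t3, h12, h13, h23, hNeq⟩ := Set.ncard_eq_three.mp hcard3
    have hmemN : t1 ∈ N ∧ t2 ∈ N ∧ t3 ∈ N := by
      rw [hNeq]; exact ⟨by simp, by simp, by simp⟩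
    have hNsub : ∀ w : H.Slim, w ∈ N → w = t1 ∨ w = t2 ∨ w = t3 := by
      intro w hw; rw [hNeq] at hw; simpa using hw
    -- integer coordinates
    set g : V → Fin n → ℤ := fun v i => if h : H.IsSlim v then (hint v h i).choose else 0
      with hgdef
    have hg : ∀ (v : V) (hv : H.IsSlim v) (i : Fin n), ψ v i = (g v i : ℝ) := by
      intro v hv i
      rw [hgdef]
      simp only [dif_pos hv]
      exact (hint v hv i).choose_spec
    have hQ : ∀ x y : V, H.IsSlim x → H.IsSlim y →
        ⟪ψ x, ψ y⟫ = ((∑ i, g x i * g y i : ℤ) : ℝ) := by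
      intro x y hx hy
      have base : ⟪ψ x, ψ y⟫ = ∑ i, ψ x i * ψ y i := by
        simp [PiLp.inner_apply, RCLike.inner_apply, mul_comm]
      rw [base]
      push_cast
      exact Finset.sum_congr rfl fun i _ => by rw [hg x hx i, hg y hy i]
    have hQss : ∑ i, g s i * g s i = 2 := by
      have := hqss; rw [hQ s s hs hs] at this; exact_mod_cast this
    have hQle2 : ∀ x : V, H.IsSlim x → ∑ i, g x i * g x i ≤ 2 := by
      intro x hx
      have := hself_le x hx; rw [hQ x x hx hx] at this; exact_mod_cast this
    have hQst : ∀ t : H.Slim, t ∈ N → ∑ i, g s i * g t.1 i = -1 := by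
      intro t ht
      have := (hNfact t ht).2.1; rw [hQ s t.1 hs t.2] at this; exact_mod_cast this
    have hQpair : ∀ t u : H.Slim, t ∈ N → u ∈ N → t ≠ u →
        ∑ i, g t.1 i * g u.1 i = 0 := by
      intro t u ht hu htu
      have := hpair0 t u ((hTmem t).mpr ht) ((hTmem u).mpr hu) htu
      rw [hQ t.1 u.1 t.2 u.2] at this; exact_mod_cast this
    obtain ⟨a, b, hab, hu2, hub2, hu0⟩ := int_norm_two_support (g s) hQss
    -- the main argument, symmetric in the two coordinates
    have main : ∀ (a' b' : Fin n), a' ≠ b' → (g s a' * g s a' = 1) →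
        (g s b' * g s b' = 1) → (∀ i, i ≠ a' → i ≠ b' → g s i = 0) →
        ∀ x y z : H.Slim, x ∈ N → y ∈ N → z ∈ N → x ≠ y → y ≠ z → x ≠ z →
        (g s a' * g x.1 a' = -1 ∧ g x.1 b' = 0) →
        (g s a' * g y.1 a' = -1 ∧ g y.1 b' = 0) →
        (g s b' * g z.1 b' = -1 ∧ g z.1 a' = 0) →
        H.specialMinus.neighborSet x = {s'} ∧ H.specialMinus.neighborSet y = {s'} := by
      intro a' b' hab' hu2' hub2' hu0' x y z hxN hyN hzN hxy hyz hxz htx hty htz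
      obtain ⟨c, hca, hcb, hprod, htcc, ht'cc, htz0, ht'z0⟩ :=
        int_pair hab' (g s) (g x.1) (g y.1) hu2' (hQle2 x.1 x.2) (hQle2 y.1 y.2)
          htx.1 htx.2 hty.1 hty.2 (hQpair x y hxN hyN hxy)
      have hprod' : g y.1 c * g x.1 c = -1 := by rw [mul_comm]; exact hprod
      -- a single side of the claim
      have oneSide : ∀ p q' : H.Slim, p ∈ N → q' ∈ N → p ≠ q' → p ≠ z → q' ≠ z →
          (g s a' * g p.1 a' = -1) → (∀ i, i ≠ a' → i ≠ c → g p.1 i = 0) →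
          (g p.1 c * g p.1 c = 1) →
          (g s a' * g q'.1 a' = -1) → (∀ i, i ≠ a' → i ≠ c → g q'.1 i = 0) →
          (g p.1 c * g q'.1 c = -1) →
          H.specialMinus.neighborSet p = {s'} := by
        intro p q' hpN hq'N hpq' hpz hq'z hpa hp0 hpcc hqa hq0 hpqc
        -- fatDeg p = 1
        have hQpp : ∑ i, g p.1 i * g p.1 i = 2 := by
          have hge : 2 ≤ ∑ i, g p.1 i * g p.1 i := by
            have hac' : a' ≠ c := fun h => hca h.symm
            have hsplit := int_sum_split hac' (fun i => g p.1 i * g p.1 i)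
            have hpa' : g p.1 a' = -(g s a') := by
              rcases mul_self_eq_one_iff.mp hu2' with h' | h' <;> rw [h'] at hpa ⊢ <;> omega
            have hpa2 : g p.1 a' * g p.1 a' = 1 := by
              rw [hpa']
              rcases mul_self_eq_one_iff.mp hu2' with h' | h' <;> rw [h'] <;> ring
            have hrest : 0 ≤ ∑ i ∈ Finset.univ \ {a', c}, g p.1 i * g p.1 i :=
              Finset.sum_nonneg fun i _ => mul_self_nonneg _
            omega
          have := hQle2 p.1 p.2
          omega
        have hfdp : H.fatDeg p.1 = 1 := by
          have h2 : ⟪ψ p.1, ψ p.1⟫ = 2 := by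
            rw [hQ p.1 p.1 p.2 p.2]; exact_mod_cast hQpp
          rw [aux_q_self hψ p.2] at h2
          have : (H.fatDeg p.1 : ℝ) = 1 := by linarith
          exact_mod_cast this
        apply Set.eq_singleton_iff_unique_mem.mpr
        constructor
        · show H.specialMinus.Adj p s'
          exact (hadjN3 p hpN).symm
        · intro w hw
          by_contra hws
          have hadj : H.specialMinus.Adj p w := hw
          obtain ⟨hpw, hqpw⟩ := (aux_sminus_adj_iff hψ p w).mp hadj
          -- w is not one of the neighbors and not s'
          have hwN : w ∉ N := by
            intro hwN'
            rw [hQ p.1 w.1 p.2 w.2, hQpair p w hpN hwN' hpw] at hqpw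
            norm_num at hqpw
          have hwq : ⟪ψ w.1, ψ p.1⟫ < 0 := by rw [real_inner_comm]; exact hqpw
          have hwp1 : w.1 ≠ p.1 := fun h => hpw (Subtype.ext h.symm)
          have h2 := aux_q_neg hψ w.2 p.2 hwp1 hwq
          have hcle : H.commonFat w.1 p.1 ≤ 1 := by
            have h3 := aux_common_le_fatDeg (H := H) p.1 w.1
            rw [H.commonFat_comm] at h3
            rw [hfdp] at h3
            exact h3
          have hc1' : 1 ≤ H.commonFat p.1 w.1 := by rw [H.commonFat_comm]; exact h2.2
          have hwf : H.graph.Adj w.1 f :=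
            aux_unique_fat (H := H) hfdp hc1' hff.1 (hNfact p hpN).2.2
          have hws1 : w.1 ≠ s := fun h => hws (Subtype.ext h)
          -- inner products of w with s, q', z
          have hqws : ⟪ψ w.1, ψ s⟫ = 0 := by
            have hc : 1 ≤ H.commonFat w.1 s := aux_common_pos (H := H) hff.1 hwf hff.2
            have hle := aux_common_pos_q_nonpos hψ w.2 hs hws1 hc
            rcases lt_or_eq_of_le hle with h' | h'
            · exfalso
              apply hwN
              show H.specialMinus.Adj s' w
              rw [aux_sminus_adj_iff hψ]
              exact ⟨fun h => hws h.symm, by rw [real_inner_comm]; exact h'⟩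
            · exact h'
          have hqwq' : ⟪ψ w.1, ψ q'.1⟫ ≤ 0 := by
            have hwq1 : w.1 ≠ q'.1 := by
              intro h
              have hwq : w = q' := Subtype.ext h
              rw [hwq, hQ p.1 q'.1 p.2 q'.2, hQpair p q' hpN hq'N hpq'] at hqpw
              norm_num at hqpw
            have hc : 1 ≤ H.commonFat w.1 q'.1 :=
              aux_common_pos (H := H) hff.1 hwf (hNfact q' hq'N).2.2
            exact aux_common_pos_q_nonpos hψ w.2 q'.2 hwq1 hc
          have hqwz : ⟪ψ w.1, ψ z.1⟫ ≤ 0 := by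
            have hwz1 : w.1 ≠ z.1 := by
              intro h
              exact hwN (by rw [Subtype.ext h]; exact hzN)
            have hc : 1 ≤ H.commonFat w.1 z.1 :=
              aux_common_pos (H := H) hff.1 hwf (hNfact z hzN).2.2
            exact aux_common_pos_q_nonpos hψ w.2 z.2 hwz1 hc
          -- move to the integers
          have hZw2 : ∑ i, g w.1 i * g w.1 i ≤ 2 := hQle2 w.1 w.2
          have hZwu : ∑ i, g s i * g w.1 i = 0 := by
            have h5 : ⟪ψ s, ψ w.1⟫ = 0 := by rw [real_inner_comm]; exact hqws
            rw [hQ s w.1 hs w.2] at h5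
            exact_mod_cast h5
          have hZwt : ∑ i, g p.1 i * g w.1 i = -1 := by
            have h3 : ⟪ψ p.1, ψ w.1⟫ = -1 := by
              rcases h2 with ⟨hle, hc⟩
              have hge : -1 ≤ ⟪ψ w.1, ψ p.1⟫ := by
                rcases aux_q_cases hψ w.2 p.2 hwp1 with ⟨hadj', he⟩ | ⟨hadj', he⟩ <;> rw [he]
                · have : (H.commonFat w.1 p.1 : ℝ) ≤ 1 := by exact_mod_cast hcle
                  linarith
                · have : (H.commonFat w.1 p.1 : ℝ) ≤ 1 := by exact_mod_cast hcle
                  linarith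
              rw [real_inner_comm]
              linarith
            rw [hQ p.1 w.1 p.2 w.2] at h3
            exact_mod_cast h3
          have hZwt' : ∑ i, g q'.1 i * g w.1 i ≤ 0 := by
            have h5 : ⟪ψ q'.1, ψ w.1⟫ ≤ 0 := by rw [real_inner_comm]; exact hqwq'
            rw [hQ q'.1 w.1 q'.2 w.2] at h5
            exact_mod_cast h5
          have hZwk : ∑ i, g z.1 i * g w.1 i ≤ 0 := by
            have h5 : ⟪ψ z.1, ψ w.1⟫ ≤ 0 := by rw [real_inner_comm]; exact hqwz
            rw [hQ z.1 w.1 z.2 w.2] at h5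
            exact_mod_cast h5
          exact int_final hab' hca hcb (g s) (g p.1) (g q'.1) (g z.1) (g w.1)
            hu2' hub2' hu0' hpa hp0 hpcc hqa hq0 hpqc htz.1 htz.2
            hZw2 hZwu hZwt hZwt' hZwk
      refine ⟨oneSide x y hxN hyN hxy hxz hyz htx.1 htz0 htcc hty.1 ht'z0 hprod,
        oneSide y x hyN hxN (fun h => hxy h.symm) hyz hxz hty.1 ht'z0 ht'cc htx.1 htz0 hprod'⟩
    -- types of the three neighbors
    have htype : ∀ t : H.Slim, t ∈ N →
        (g s a * g t.1 a = -1 ∧ g t.1 b = 0) ∨ (g s b * g t.1 b = -1 ∧ g t.1 a = 0) :=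
      fun t ht => int_type hab (g s) (g t.1) hu2 hub2 hu0
        (int_entry_bound (g t.1) (hQle2 t.1 t.2)) (hQst t ht)
    have hno3A : ∀ x y z : H.Slim, x ∈ N → y ∈ N → z ∈ N → x ≠ y → y ≠ z → x ≠ z →
        (g s a * g x.1 a = -1 ∧ g x.1 b = 0) → (g s a * g y.1 a = -1 ∧ g y.1 b = 0) →
        (g s a * g z.1 a = -1 ∧ g z.1 b = 0) → False := by
      intro x y z hx hy hz hxy hyz hxz h1' h2' h3'
      exact int_three hab (g s) (g x.1) (g y.1) (g z.1) hu2
        (hQle2 x.1 x.2) (hQle2 y.1 y.2) (hQle2 z.1 z.2)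
        h1'.1 h1'.2 h2'.1 h2'.2 h3'.1 h3'.2
        (hQpair x y hx hy hxy) (hQpair x z hx hz hxz) (hQpair y z hy hz hyz)
    have hno3B : ∀ x y z : H.Slim, x ∈ N → y ∈ N → z ∈ N → x ≠ y → y ≠ z → x ≠ z →
        (g s b * g x.1 b = -1 ∧ g x.1 a = 0) → (g s b * g y.1 b = -1 ∧ g y.1 a = 0) →
        (g s b * g z.1 b = -1 ∧ g z.1 a = 0) → False := by
      intro x y z hx hy hz hxy hyz hxz h1' h2' h3'
      exact int_three hab.symm (g s) (g x.1) (g y.1) (g z.1) hub2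
        (hQle2 x.1 x.2) (hQle2 y.1 y.2) (hQle2 z.1 z.2)
        h1'.1 h1'.2 h2'.1 h2'.2 h3'.1 h3'.2
        (hQpair x y hx hy hxy) (hQpair x z hx hz hxz) (hQpair y z hy hz hyz)
    obtain ⟨hm1, hm2, hm3⟩ := hmemN
    have mainA := main a b hab hu2 hub2 hu0
    have mainB := main b a hab.symm hub2 hu2 (fun i h1' h2' => hu0 i h2' h1')
    rcases htype t1 hm1 with hty1 | hty1 <;> rcases htype t2 hm2 with hty2 | hty2 <;>
      rcases htype t3 hm3 with hty3 | hty3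
    · exact absurd (hno3A t1 t2 t3 hm1 hm2 hm3 h12 h23 h13 hty1 hty2 hty3) not_false
    · obtain ⟨hs1, hs2⟩ := mainA t1 t2 t3 hm1 hm2 hm3 h12 h23 h13 hty1 hty2 hty3
      exact ⟨t1, t2, h12, hm1, hm2, hs1, hs2⟩
    · obtain ⟨hs1, hs2⟩ := mainA t1 t3 t2 hm1 hm3 hm2 h13 (Ne.symm h23) h12 hty1 hty3 hty2
      exact ⟨t1, t3, h13, hm1, hm3, hs1, hs2⟩
    · obtain ⟨hs1, hs2⟩ := mainB t2 t3 t1 hm2 hm3 hm1 h23 (Ne.symm h13) (Ne.symm h12) hty2 hty3 hty1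
      exact ⟨t2, t3, h23, hm2, hm3, hs1, hs2⟩
    · obtain ⟨hs1, hs2⟩ := mainA t2 t3 t1 hm2 hm3 hm1 h23 (Ne.symm h13) (Ne.symm h12) hty2 hty3 hty1
      exact ⟨t2, t3, h23, hm2, hm3, hs1, hs2⟩
    · obtain ⟨hs1, hs2⟩ := mainB t1 t3 t2 hm1 hm3 hm2 h13 (Ne.symm h23) h12 hty1 hty3 hty2
      exact ⟨t1, t3, h13, hm1, hm3, hs1, hs2⟩
    · obtain ⟨hs1, hs2⟩ := mainB t1 t2 t3 hm1 hm2 hm3 h12 h23 h13 hty1 hty2 hty3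
      exact ⟨t1, t2, h12, hm1, hm2, hs1, hs2⟩
    · exact absurd (hno3B t1 t2 t3 hm1 hm2 hm3 h12 h23 h13 hty1 hty2 hty3) not_false
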